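/- There is a bijection between the set of contiguous paths in S_N and the set of reduced expressions w = s_{p_1} s_{p_2} ⋯ s_{p_M} of the longest element w₀ ∈ S_N (M = binom(N,2)) such that every initial subword s_{p_1}⋯s_{p_i}, for 1 ≤ i ≤ M-1, belongs to Ξ_N; the bijection sends such a reduced word to the path of its initial subwords. -/

import Mathlib

/-- Ξ_N : permutations of `Fin N` mapping every initial segment (with ≥ 2
elements) to an interval. -/
def XiSet (N : ℕ) : Set (Equiv.Perm (Fin N)) :=
  {τ | ∀ k : Fin N, 0 < k.val →
    ∃ a b : Fin N, (Finset.Iic k).image τ = Finset.Icc a b}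

/-- The simple transposition `s_p = (p, p+1)` of `Fin N` (and `1` if out of range). -/
def swapAt (N : ℕ) (p : ℕ) : Equiv.Perm (Fin N) :=
  if h : p + 1 < N then Equiv.swap ⟨p, Nat.lt_of_succ_lt h⟩ ⟨p + 1, h⟩ else 1

/-- The product `s_{p_1} s_{p_2} ⋯ s_{p_M}` of the simple transpositions
indexed by a list of positions. -/
def wordProd (N : ℕ) (L : List ℕ) : Equiv.Perm (Fin N) :=
  (L.map (swapAt N)).prod

/-- A reduced expression `s_{p_1} ⋯ s_{p_M}` of the longest element `w₀ ∈ S_N`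
(so `M = binom(N,2)`) all of whose proper initial subwords lie in Ξ_N. -/
def XiRedWord (N : ℕ) (L : List ℕ) : Prop :=
  L.length = N * (N - 1) / 2 ∧ (∀ p ∈ L, p + 1 < N) ∧
    wordProd N L = (Fin.revPerm : Equiv.Perm (Fin N)) ∧
    ∀ i : ℕ, 1 ≤ i → i ≤ L.length - 1 → wordProd N (L.take i) ∈ XiSet N

/-- A contiguous path in `S_N` (0-based): a sequence
`id = ν₁ ↦ ν₂ ↦ ... ↦ ν_{M+1} = w₀` of permutations of `Fin N` in which each
step interchanges two adjacent entries `m < n` (with `m` to the left of `n`) of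
the one-line notation, and the integer `m` may be moved to the right only when
all smaller integers have already been pulled to the right of it. -/
structure ContigPath (N : ℕ) where
  /-- number of steps -/
  M : ℕ
  /-- the permutations along the path -/
  ν : Fin (M + 1) → Equiv.Perm (Fin N)
  /-- the position at which step `i` swaps the entries in slots `pos i`, `pos i + 1` -/
  pos : Fin M → Fin N
  hpos : ∀ i : Fin M, (pos i).val + 1 < N
  start : ν 0 = 1
  finish : ν (Fin.last M) = Fin.revPerm
  step : ∀ i : Fin M,
    ν i.succ = ν i.castSucc * Equiv.swap (pos i) ⟨(pos i).val + 1, hpos i⟩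
  incr : ∀ i : Fin M,
    ν i.castSucc (pos i) < ν i.castSucc ⟨(pos i).val + 1, hpos i⟩
  rule : ∀ i : Fin M, ∀ j : Fin N, j < ν i.castSucc (pos i) →
    pos i < (ν i.castSucc).symm j

namespace ContigAux

variable {N : ℕ}

/-- number of inversions of a permutation of `Fin N` -/
def invCount (σ : Equiv.Perm (Fin N)) : ℕ :=
  (Finset.univ.filter (fun x : Fin N × Fin N => x.1 < x.2 ∧ σ x.2 < σ x.1)).card

lemma invCount_one : invCount (1 : Equiv.Perm (Fin N)) = 0 := by
  rw [invCount, Finset.card_eq_zero, Finset.filter_eq_empty_iff]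
  rintro x - ⟨h1, h2⟩
  simp only [Equiv.Perm.one_apply] at h2
  exact absurd h2 (not_lt.2 h1.le)

lemma invCount_rev : invCount (Fin.revPerm : Equiv.Perm (Fin N)) = N * (N - 1) / 2 := by
  have h1 : ∀ x : Fin N × Fin N,
      (x.1 < x.2 ∧ Fin.revPerm x.2 < Fin.revPerm x.1) ↔ x.1 < x.2 := by
    intro x
    simp [Fin.rev_lt_rev]
  have hfe : Finset.univ.filter
        (fun x : Fin N × Fin N => x.1 < x.2 ∧ Fin.revPerm x.2 < Fin.revPerm x.1)
      = Finset.univ.filter (fun x : Fin N × Fin N => x.1 < x.2) := by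
    ext x
    simp [h1 x]
  rw [invCount, hfe]
  rw [Finset.card_filter, Fintype.sum_prod_type_right]
  have h2 : ∀ b : Fin N, (∑ a : Fin N, if a < b then (1:ℕ) else 0) = b.val := by
    intro b
    rw [← Finset.card_filter]
    have : Finset.filter (fun a : Fin N => a < b) Finset.univ = Finset.Iio b := by
      ext x; simp
    rw [this, Fin.card_Iio]
  rw [Finset.sum_congr rfl (fun b _ => h2 b)]
  rw [Fin.sum_univ_eq_sum_range (fun i => i), Finset.sum_range_id]

lemma swap_lt_swap {p q i j : Fin N} (hpq : q.val = p.val + 1) (hij : i < j)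
    (hne : ¬(i = p ∧ j = q)) : Equiv.swap p q i < Equiv.swap p q j := by
  have hijv : i.val < j.val := hij
  rw [Fin.lt_def]
  rcases eq_or_ne i p with rfl | hip
  · have hjq : j ≠ q := fun hc => hne ⟨rfl, hc⟩
    have hjp : j ≠ i := fun hc => absurd hijv (by rw [hc]; omega)
    rw [Equiv.swap_apply_left, Equiv.swap_apply_of_ne_of_ne hjp hjq]
    rw [Ne, Fin.ext_iff] at hjq
    omega
  · rcases eq_or_ne i q with rfl | hiq
    · have hjp : j ≠ p := by rw [Ne, Fin.ext_iff]; omega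
      have hjq : j ≠ i := fun hc => absurd hijv (by rw [hc]; omega)
      rw [Equiv.swap_apply_right, Equiv.swap_apply_of_ne_of_ne hjp hjq]
      rw [Ne, Fin.ext_iff] at hjp
      omega
    · rw [Equiv.swap_apply_of_ne_of_ne hip hiq]
      rcases eq_or_ne j p with rfl | hjp
      · rw [Equiv.swap_apply_left]; omega
      · rcases eq_or_ne j q with rfl | hjq
        · rw [Equiv.swap_apply_right]
          rw [Ne, Fin.ext_iff] at hip
          omega
        · rw [Equiv.swap_apply_of_ne_of_ne hjp hjq]
          omega

lemma invCount_mul_swap (σ : Equiv.Perm (Fin N)) {p q : Fin N} (hpq : q.val = p.val + 1)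
    (h : σ p < σ q) : invCount (σ * Equiv.swap p q) = invCount σ + 1 := by
  classical
  set s := Equiv.swap p q with hs
  have hss : ∀ x, s (s x) = x := fun x => Equiv.swap_apply_self p q x
  have hpq' : p < q := by rw [Fin.lt_def]; omega
  have hinj : Function.Injective (Prod.map s s : Fin N × Fin N → Fin N × Fin N) :=
    Function.Injective.prodMap s.injective s.injective
  have key : (Finset.univ.filter (fun x : Fin N × Fin N => x.1 < x.2 ∧ (σ * s) x.2 < (σ * s) x.1))
      = insert (p, q) ((Finset.univ.filter
          (fun x : Fin N × Fin N => x.1 < x.2 ∧ σ x.2 < σ x.1)).image (Prod.map s s)) := by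
    ext ⟨i, j⟩
    rw [Finset.mem_filter]
    simp only [Finset.mem_filter, Finset.mem_insert, Finset.mem_image, Finset.mem_univ, true_and,
      Equiv.Perm.mul_apply, Prod.mk.injEq, Prod.exists, Prod.map_apply]
    constructor
    · rintro ⟨hij, hlt⟩
      by_cases hc : i = p ∧ j = q
      · exact Or.inl hc
      · exact Or.inr ⟨s i, s j, ⟨swap_lt_swap hpq hij hc, hlt⟩, hss i, hss j⟩
    · rintro (⟨rfl, rfl⟩ | ⟨a, b, ⟨hab, hba⟩, hi, hj⟩)
      · refine ⟨hpq', ?_⟩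
        rw [Equiv.swap_apply_left, Equiv.swap_apply_right]
        exact h
      · subst hi; subst hj
        refine ⟨?_, by rw [hss, hss]; exact hba⟩
        refine swap_lt_swap hpq hab ?_
        rintro ⟨rfl, rfl⟩
        exact absurd hba (not_lt.2 h.le)
  rw [invCount, key, Finset.card_insert_of_notMem, Finset.card_image_of_injective _ hinj]
  · rfl
  · intro hmem
    obtain ⟨x, hx, hfx⟩ := Finset.mem_image.1 hmem
    obtain ⟨a, b⟩ := x
    simp only [Prod.map_apply, Prod.mk.injEq] at hfx
    have ha : a = q := by
      have := congrArg s hfx.1; rwa [hss, Equiv.swap_apply_left] at this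
    have hb : b = p := by
      have := congrArg s hfx.2; rwa [hss, Equiv.swap_apply_right] at this
    rw [ha, hb] at hx
    simp only [Finset.mem_filter] at hx
    exact absurd hx.2.1 (not_lt.2 hpq'.le)

lemma one_mem_xiSet : (1 : Equiv.Perm (Fin N)) ∈ XiSet N := by
  intro k _
  refine ⟨⟨0, k.pos⟩, k, ?_⟩
  ext x
  simp only [Finset.mem_image, Finset.mem_Iic, Finset.mem_Icc, Equiv.Perm.one_apply]
  constructor
  · rintro ⟨y, hy, rfl⟩
    exact ⟨by simp [Fin.le_def], hy⟩
  · rintro ⟨-, h2⟩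
    exact ⟨x, h2, rfl⟩

lemma rev_mem_xiSet : (Fin.revPerm : Equiv.Perm (Fin N)) ∈ XiSet N := by
  intro k _
  refine ⟨k.rev, ⟨N - 1, by omega⟩, ?_⟩
  ext x
  simp only [Finset.mem_image, Finset.mem_Iic, Finset.mem_Icc, Fin.revPerm_apply, Fin.le_def,
    Fin.val_rev]
  have hx := x.isLt
  constructor
  · rintro ⟨y, hy, rfl⟩
    simp only [Fin.val_rev]
    omega
  · rintro ⟨h1, -⟩
    refine ⟨x.rev, ?_, Fin.rev_rev x⟩
    simp only [Fin.val_rev]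
    omega

lemma xi_step {σ : Equiv.Perm (Fin N)} (hσ : σ ∈ XiSet N) {p q : Fin N}
    (hpq : q.val = p.val + 1) (hincr : σ p < σ q)
    (hrule : ∀ j : Fin N, j < σ p → p < σ.symm j) :
    σ * Equiv.swap p q ∈ XiSet N := by
  intro k hk
  have hss : ∀ x, Equiv.swap p q (Equiv.swap p q x) = x := fun x => Equiv.swap_apply_self p q x
  by_cases hkp : k = p
  · rw [hkp] at hk ⊢
    obtain ⟨a, b, hab⟩ := hσ q (by omega)
    have hmem_m : σ p ∈ Finset.Icc a b := by
      rw [← hab]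
      exact Finset.mem_image_of_mem _ (by rw [Finset.mem_Iic, Fin.le_def]; omega)
    have hab' := Finset.mem_Icc.1 hmem_m
    have ham : a = σ p := by
      by_contra hne
      have halt : a < σ p := lt_of_le_of_ne hab'.1 hne
      have hpa := hrule a halt
      have haB : a ∈ Finset.Icc a b := Finset.mem_Icc.2 ⟨le_rfl, le_trans hab'.1 hab'.2⟩
      rw [← hab] at haB
      obtain ⟨y, hy, hya⟩ := Finset.mem_image.1 haB
      rw [Finset.mem_Iic] at hy
      have hyv : σ.symm a = y := by rw [← hya, Equiv.symm_apply_apply]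
      rw [hyv] at hpa
      have : y = q := by
        rw [Fin.le_def] at hy; rw [Fin.lt_def] at hpa
        exact Fin.ext (by omega)
      rw [this] at hya
      rw [← hya] at halt
      exact absurd hincr (not_lt.2 halt.le)
    have hm1 : (σ p).val + 1 < N := by
      have h1 : (σ p).val < (σ q).val := hincr
      have h2 := (σ q).isLt
      omega
    refine ⟨⟨(σ p).val + 1, hm1⟩, b, ?_⟩
    have h1 : (Finset.Iic p).image (⇑(σ * Equiv.swap p q)) = ((Finset.Iic q).image ⇑σ).erase (σ p) := by
      ext x
      simp only [Finset.mem_image, Finset.mem_erase, Finset.mem_Iic, Equiv.Perm.mul_apply]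
      constructor
      · rintro ⟨y, hy, rfl⟩
        rw [Fin.le_def] at hy
        constructor
        · intro hEq
          have h2 : Equiv.swap p q y = p := σ.injective hEq
          have h3 : y = q := by
            have := congrArg (Equiv.swap p q) h2
            rwa [hss, Equiv.swap_apply_left] at this
          rw [h3] at hy; omega
        · refine ⟨Equiv.swap p q y, ?_, rfl⟩
          rw [Fin.le_def]
          rcases eq_or_ne y p with rfl | hyp
          · rw [Equiv.swap_apply_left]
          · rw [Equiv.swap_apply_of_ne_of_ne hyp (by rw [Ne, Fin.ext_iff]; omega)]
            omega
      · rintro ⟨hxm, y, hy, rfl⟩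
        rw [Fin.le_def] at hy
        have hyp : y ≠ p := fun hc => hxm (by rw [hc])
        refine ⟨Equiv.swap p q y, ?_, by rw [hss]⟩
        rw [Fin.le_def]
        rcases eq_or_ne y q with rfl | hyq
        · rw [Equiv.swap_apply_right]
        · rw [Equiv.swap_apply_of_ne_of_ne hyp hyq]
          rw [Ne, Fin.ext_iff] at hyp
          omega
    rw [h1, hab, ham]
    ext x
    simp only [Finset.mem_erase, Finset.mem_Icc, Fin.le_def, Ne, Fin.ext_iff]
    omega
  · obtain ⟨a, b, hab⟩ := hσ k hk
    refine ⟨a, b, ?_⟩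
    rw [← hab]
    have h2 : ∀ y : Fin N, Equiv.swap p q y ≤ k ↔ y ≤ k := by
      intro y
      have hkp' : k.val ≠ p.val := fun hh => hkp (Fin.ext hh)
      rcases eq_or_ne y p with rfl | hyp
      · rw [Equiv.swap_apply_left, Fin.le_def, Fin.le_def]; omega
      · rcases eq_or_ne y q with rfl | hyq
        · rw [Equiv.swap_apply_right, Fin.le_def, Fin.le_def]; omega
        · rw [Equiv.swap_apply_of_ne_of_ne hyp hyq]
    ext x
    simp only [Finset.mem_image, Finset.mem_Iic, Equiv.Perm.mul_apply]
    constructor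
    · rintro ⟨y, hy, rfl⟩
      exact ⟨Equiv.swap p q y, (h2 y).2 hy, rfl⟩
    · rintro ⟨y, hy, rfl⟩
      exact ⟨Equiv.swap p q y, (h2 y).2 hy, by rw [hss]⟩

lemma rule_of_xiPair {σ : Equiv.Perm (Fin N)} {p q : Fin N} (hpq : q.val = p.val + 1)
    (hτ : σ * Equiv.swap p q ∈ XiSet N) (hincr : σ p < σ q) :
    ∀ j : Fin N, j < σ p → p < σ.symm j := by
  intro j hj
  by_contra hle
  push_neg at hle
  have hne : σ.symm j ≠ p := by
    intro hc
    have : j = σ p := by rw [← hc, Equiv.apply_symm_apply]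
    rw [this] at hj
    exact lt_irrefl _ hj
  have hlt : σ.symm j < p := lt_of_le_of_ne hle hne
  have hp0 : 0 < p.val := by
    rw [Fin.lt_def] at hlt; omega
  obtain ⟨a, b, hab⟩ := hτ p hp0
  have hjmem : j ∈ Finset.Icc a b := by
    rw [← hab]
    refine Finset.mem_image.2 ⟨σ.symm j, Finset.mem_Iic.2 hle, ?_⟩
    have h1 : Equiv.swap p q (σ.symm j) = σ.symm j := by
      refine Equiv.swap_apply_of_ne_of_ne hne ?_
      rw [Fin.lt_def] at hlt
      rw [Ne, Fin.ext_iff]; omega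
    rw [Equiv.Perm.mul_apply, h1, Equiv.apply_symm_apply]
  have hnmem : σ q ∈ Finset.Icc a b := by
    rw [← hab]
    refine Finset.mem_image.2 ⟨p, Finset.mem_Iic.2 le_rfl, ?_⟩
    rw [Equiv.Perm.mul_apply, Equiv.swap_apply_left]
  have hm_not : σ p ∉ Finset.Icc a b := by
    rw [← hab]
    intro hmem
    obtain ⟨y, hy, hyp⟩ := Finset.mem_image.1 hmem
    rw [Equiv.Perm.mul_apply] at hyp
    have h2 : Equiv.swap p q y = p := σ.injective hyp
    have h3 : y = q := by
      have := congrArg (Equiv.swap p q) h2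
      rwa [Equiv.swap_apply_self, Equiv.swap_apply_left] at this
    rw [Finset.mem_Iic, Fin.le_def] at hy
    rw [h3] at hy
    omega
  rw [Finset.mem_Icc] at hjmem hnmem
  exact hm_not (Finset.mem_Icc.2 ⟨le_trans hjmem.1 hj.le, le_trans hincr.le hnmem.2⟩)

lemma wordProd_nil : wordProd N [] = 1 := rfl

lemma wordProd_append (L : List ℕ) (x : ℕ) :
    wordProd N (L ++ [x]) = wordProd N L * swapAt N x := by
  simp [wordProd]

lemma swapAt_eq {p : ℕ} (h : p + 1 < N) :
    swapAt N p = Equiv.swap ⟨p, Nat.lt_of_succ_lt h⟩ ⟨p + 1, h⟩ := dif_pos h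


lemma path_word_take (P : ContigPath N) :
    ∀ (i : ℕ) (h : i ≤ P.M), wordProd N ((List.ofFn fun j => (P.pos j).val).take i)
      = P.ν ⟨i, Nat.lt_succ_of_le h⟩ := by
  intro i
  induction i with
  | zero =>
    intro h
    rw [List.take_zero, wordProd_nil]
    rw [show (⟨0, Nat.lt_succ_of_le h⟩ : Fin (P.M + 1)) = 0 from rfl, P.start]
  | succ n ih =>
    intro h
    have hn : n < P.M := h
    have hlen : n < (List.ofFn fun j => (P.pos j).val).length := by
      rw [List.length_ofFn]; exact hn
    rw [List.take_succ, List.getElem?_eq_getElem hlen, List.getElem_ofFn]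
    simp only [Option.toList_some]
    rw [wordProd_append, ih (Nat.le_of_lt hn)]
    rw [show (⟨n + 1, Nat.lt_succ_of_le h⟩ : Fin (P.M + 1)) = (⟨n, hn⟩ : Fin P.M).succ from rfl,
      P.step ⟨n, hn⟩, swapAt_eq (P.hpos ⟨n, hn⟩)]
    rfl

lemma path_inv (P : ContigPath N) :
    ∀ (i : ℕ) (h : i ≤ P.M), invCount (P.ν ⟨i, Nat.lt_succ_of_le h⟩) = i := by
  intro i
  induction i with
  | zero =>
    intro h
    rw [show (⟨0, Nat.lt_succ_of_le h⟩ : Fin (P.M + 1)) = 0 from rfl, P.start, invCount_one]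
  | succ n ih =>
    intro h
    have hn : n < P.M := h
    rw [show (⟨n + 1, Nat.lt_succ_of_le h⟩ : Fin (P.M + 1)) = (⟨n, hn⟩ : Fin P.M).succ from rfl,
      P.step ⟨n, hn⟩, invCount_mul_swap _ rfl (P.incr ⟨n, hn⟩)]
    exact congrArg (· + 1) (ih (Nat.le_of_lt hn))

lemma path_xi (P : ContigPath N) :
    ∀ (i : ℕ) (h : i ≤ P.M), P.ν ⟨i, Nat.lt_succ_of_le h⟩ ∈ XiSet N := by
  intro i
  induction i with
  | zero =>
    intro h
    rw [show (⟨0, Nat.lt_succ_of_le h⟩ : Fin (P.M + 1)) = 0 from rfl, P.start]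
    exact one_mem_xiSet
  | succ n ih =>
    intro h
    have hn : n < P.M := h
    rw [show (⟨n + 1, Nat.lt_succ_of_le h⟩ : Fin (P.M + 1)) = (⟨n, hn⟩ : Fin P.M).succ from rfl,
      P.step ⟨n, hn⟩]
    exact xi_step (ih (Nat.le_of_lt hn)) rfl (P.incr ⟨n, hn⟩) (P.rule ⟨n, hn⟩)

end ContigAux

open ContigAux

/-- The map sending a contiguous path to the word of positions of its swaps is
a bijection between the set of contiguous paths in `S_N` and the set of reduced
expressions of `w₀` all of whose proper initial subwords lie in Ξ_N (the
inverse sends a reduced word to the path of its initial subwords). -/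
theorem contigPath_equiv_redWords (N : ℕ) :
    ∃ f : ContigPath N → List ℕ,
      (∀ P : ContigPath N, f P = List.ofFn (fun i => (P.pos i).val)) ∧
      Function.Injective f ∧
      Set.range f = {L : List ℕ | XiRedWord N L} := by
  classical
  refine ⟨fun P => List.ofFn (fun i => (P.pos i).val), fun _ => rfl, ?_, ?_⟩
  · intro P Q h
    simp only at h
    obtain ⟨M, ν, pos, hpos, hstart, hfinish, hstep, hincr, hrule⟩ := P
    obtain ⟨M', ν', pos', hpos', hstart', hfinish', hstep', hincr', hrule'⟩ := Q
    simp only at h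
    have hM : M = M' := by
      have := congrArg List.length h
      simpa using this
    subst hM
    obtain rfl : pos = pos' := by
      have h2 := List.ofFn_injective h
      funext i
      exact Fin.val_injective (congrFun h2 i)
    have hν : ν = ν' := by
      have key : ∀ (k : ℕ) (hk : k ≤ M),
          ν ⟨k, Nat.lt_succ_of_le hk⟩ = ν' ⟨k, Nat.lt_succ_of_le hk⟩ := by
        intro k
        induction k with
        | zero =>
          intro hk
          rw [show (⟨0, Nat.lt_succ_of_le hk⟩ : Fin (M + 1)) = 0 from rfl, hstart, hstart']
        | succ n ih =>
          intro hk
          have hn : n < M := hk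
          rw [show (⟨n + 1, Nat.lt_succ_of_le hk⟩ : Fin (M + 1)) = (⟨n, hn⟩ : Fin M).succ from rfl,
            hstep ⟨n, hn⟩, hstep' ⟨n, hn⟩,
            show ((⟨n, hn⟩ : Fin M)).castSucc
              = (⟨n, Nat.lt_succ_of_le (Nat.le_of_lt hn)⟩ : Fin (M + 1)) from rfl,
            ih (Nat.le_of_lt hn)]
      funext i
      have h3 := key i.val (Nat.lt_succ_iff.mp i.isLt)
      exact h3
    subst hν
    rfl
  · ext L
    simp only [Set.mem_range, Set.mem_setOf_eq]
    constructor
    · rintro ⟨P, rfl⟩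
      have hM : P.M = N * (N - 1) / 2 := by
        have h1 := path_inv P P.M le_rfl
        rw [show (⟨P.M, Nat.lt_succ_of_le le_rfl⟩ : Fin (P.M + 1)) = Fin.last P.M from rfl,
          P.finish, invCount_rev] at h1
        exact h1.symm
      refine ⟨by simpa using hM, ?_, ?_, ?_⟩
      · intro p hp
        rw [List.mem_ofFn] at hp
        obtain ⟨i, rfl⟩ := hp
        exact P.hpos i
      · have h2 := path_word_take P P.M le_rfl
        rw [show (⟨P.M, Nat.lt_succ_of_le le_rfl⟩ : Fin (P.M + 1)) = Fin.last P.M from rfl,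
          P.finish] at h2
        have h3 : (List.ofFn fun j => (P.pos j).val).take P.M
            = List.ofFn fun j => (P.pos j).val := by
          apply List.take_of_length_le
          simp
        rwa [h3] at h2
      · intro i hi1 hi2
        have hiM : i ≤ P.M := by
          have h4 : (List.ofFn fun j => (P.pos j).val).length = P.M := by simp
          omega
        rw [path_word_take P i hiM]
        exact path_xi P i hiM
    · rintro ⟨hlen, hmem, hprod, hXi⟩
      have hval : ∀ (i : ℕ) (h : i < L.length), L[i] + 1 < N := by
        intro i h
        exact hmem _ (List.getElem_mem h)
      have hstep : ∀ (i : ℕ) (h : i < L.length), wordProd N (L.take (i + 1)) =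
          wordProd N (L.take i)
            * Equiv.swap ⟨L[i], Nat.lt_of_succ_lt (hval i h)⟩ ⟨L[i] + 1, hval i h⟩ := by
        intro i h
        rw [List.take_succ, List.getElem?_eq_getElem h]
        simp only [Option.toList_some]
        rw [wordProd_append, swapAt_eq (hval i h)]
      have hXiAll : ∀ i : ℕ, i ≤ L.length → wordProd N (L.take i) ∈ XiSet N := by
        intro i hi
        rcases Nat.eq_zero_or_pos i with rfl | h1
        · rw [List.take_zero, wordProd_nil]; exact one_mem_xiSet
        rcases eq_or_lt_of_le hi with rfl | h2
        · rw [List.take_length, hprod]; exact rev_mem_xiSet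
        · exact hXi i h1 (by omega)
      have hne : ∀ (i : ℕ) (h : i < L.length),
          wordProd N (L.take i) ⟨L[i], Nat.lt_of_succ_lt (hval i h)⟩ ≠
          wordProd N (L.take i) ⟨L[i] + 1, hval i h⟩ := by
        intro i h hc
        have h2 := (wordProd N (L.take i)).injective hc
        simp only [Fin.mk.injEq] at h2
        omega
      have hdich : ∀ (i : ℕ) (h : i < L.length),
          invCount (wordProd N (L.take (i + 1))) = invCount (wordProd N (L.take i)) + 1 ∨
          invCount (wordProd N (L.take i)) = invCount (wordProd N (L.take (i + 1))) + 1 := by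
        intro i h
        rcases lt_or_gt_of_ne (hne i h) with hlt | hgt
        · left; rw [hstep i h]; exact invCount_mul_swap _ rfl hlt
        · right
          set σ := wordProd N (L.take i) with hσ
          set p : Fin N := ⟨L[i], Nat.lt_of_succ_lt (hval i h)⟩ with hp
          set q : Fin N := ⟨L[i] + 1, hval i h⟩ with hq
          have h2 : (σ * Equiv.swap p q) p < (σ * Equiv.swap p q) q := by
            rw [Equiv.Perm.mul_apply, Equiv.Perm.mul_apply, Equiv.swap_apply_left,
              Equiv.swap_apply_right]
            exact hgt
          have h3 := invCount_mul_swap (σ * Equiv.swap p q) rfl h2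
          rw [mul_assoc, Equiv.swap_mul_self, mul_one] at h3
          rw [hstep i h]
          exact h3
      have hle : ∀ i : ℕ, i ≤ L.length → invCount (wordProd N (L.take i)) ≤ i := by
        intro i
        induction i with
        | zero =>
          intro _
          rw [List.take_zero, wordProd_nil, invCount_one]
        | succ n ih =>
          intro h
          have hn : n < L.length := h
          have h5 := ih (Nat.le_of_lt hn)
          rcases hdich n hn with h1 | h1 <;> omega
      have hge : ∀ d i : ℕ, i + d = L.length →
          invCount (wordProd N L) ≤ invCount (wordProd N (L.take i)) + d := by
        intro d
        induction d with
        | zero =>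
          intro i hi
          rw [show i = L.length by omega, List.take_length]
          omega
        | succ n ih =>
          intro i hi
          have hn : i < L.length := by omega
          have h1 := ih (i + 1) (by omega)
          rcases hdich i hn with h2 | h2 <;> omega
      have hincr : ∀ (i : ℕ) (h : i < L.length),
          wordProd N (L.take i) ⟨L[i], Nat.lt_of_succ_lt (hval i h)⟩ <
          wordProd N (L.take i) ⟨L[i] + 1, hval i h⟩ := by
        intro i h
        rcases lt_or_gt_of_ne (hne i h) with hlt | hgt
        · exact hlt
        exfalso
        set σ := wordProd N (L.take i) with hσ
        set p : Fin N := ⟨L[i], Nat.lt_of_succ_lt (hval i h)⟩ with hp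
        set q : Fin N := ⟨L[i] + 1, hval i h⟩ with hq
        have h2 : (σ * Equiv.swap p q) p < (σ * Equiv.swap p q) q := by
          rw [Equiv.Perm.mul_apply, Equiv.Perm.mul_apply, Equiv.swap_apply_left,
            Equiv.swap_apply_right]
          exact hgt
        have h3 := invCount_mul_swap (σ * Equiv.swap p q) rfl h2
        rw [mul_assoc, Equiv.swap_mul_self, mul_one] at h3
        rw [hσ, hp, hq] at h3
        rw [← hstep i h] at h3
        have h4 := hle i (Nat.le_of_lt h)
        have h5 := hge (L.length - (i + 1)) (i + 1) (by omega)
        have h6 : invCount (wordProd N L) = L.length := by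
          rw [hprod, invCount_rev, hlen]
        omega
      have hrule : ∀ (i : ℕ) (h : i < L.length), ∀ j : Fin N,
          j < wordProd N (L.take i) ⟨L[i], Nat.lt_of_succ_lt (hval i h)⟩ →
          (⟨L[i], Nat.lt_of_succ_lt (hval i h)⟩ : Fin N) < (wordProd N (L.take i)).symm j := by
        intro i h
        refine rule_of_xiPair rfl ?_ (hincr i h)
        rw [← hstep i h]
        exact hXiAll (i + 1) h
      refine ⟨⟨L.length, fun i => wordProd N (L.take i.val),
        fun i => ⟨L[i.val]'(i.isLt), Nat.lt_of_succ_lt (hval i.val i.isLt)⟩,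
        fun i => hval i.val i.isLt, ?_, ?_, ?_, ?_, ?_⟩, ?_⟩
      · simp only [Fin.val_zero, List.take_zero]
        rfl
      · simp only [Fin.val_last]
        rw [List.take_length]
        exact hprod
      · intro i
        simp only [Fin.val_succ, Fin.coe_castSucc]
        exact hstep i.val i.isLt
      · intro i
        simp only [Fin.coe_castSucc]
        exact hincr i.val i.isLt
      · intro i
        simp only [Fin.coe_castSucc]
        exact hrule i.val i.isLt
      · simp only
        exact List.ofFn_getElem
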